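/- Let f : ℝⁿ → ℝ ∪ {∞}, let g : ℝⁿ → ℝᵐ be a mapping, and let C be a nonempty closed subset of ℝᵐ; assume f_* := inf{ f(x) : g(x) ∈ C } is finite. If there exists a constant c_* > 0 such that for every pair (x̄, ū) ∈ ℝⁿ × ℝᵐ with g(x̄) ∈ C + ū one has f_* ≤ f(x̄) + c_*·‖ū‖, then for every c > c_* the set of minimizers of f over { x : g(x) ∈ C } coincides with the set of minimizers of x ↦ f(x) + c·dist(g(x), C) over ℝⁿ. -/

import Mathlib

open scoped Pointwise

/-- Theorem 3.2, argmin conclusion: under global calmness with constant `c_*`,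
for every `c > c_*` the minimizers of `f` over `{x | g x ∈ C}` coincide with
the minimizers of `x ↦ f(x) + c · dist(g(x), C)` over `ℝⁿ`. -/
theorem stmt_5 {n m : ℕ}
    (f : EuclideanSpace ℝ (Fin n) → EReal) (hf : ∀ x, f x ≠ ⊥)
    (g : EuclideanSpace ℝ (Fin n) → EuclideanSpace ℝ (Fin m))
    (C : Set (EuclideanSpace ℝ (Fin m))) (hC : C.Nonempty) (hCcl : IsClosed C)
    (fstar : ℝ) (hfstar : (fstar : EReal) = ⨅ x ∈ {x | g x ∈ C}, f x)
    (cstar : ℝ) (hcstar : 0 < cstar)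
    (hcalm : ∀ (xbar : EuclideanSpace ℝ (Fin n)) (ubar : EuclideanSpace ℝ (Fin m)),
      g xbar ∈ C + ({ubar} : Set (EuclideanSpace ℝ (Fin m))) →
      (fstar : EReal) ≤ f xbar + ((cstar * ‖ubar‖ : ℝ) : EReal)) :
    ∀ c : ℝ, cstar < c →
      {x | g x ∈ C ∧ f x = (fstar : EReal)} =
        {x | f x + ((c * Metric.infDist (g x) C : ℝ) : EReal) =
              ⨅ x', f x' + ((c * Metric.infDist (g x') C : ℝ) : EReal)} := by
  intro c hc
  -- Key bound: fstar ≤ f x + c' * dist(g x, C) for all c' ≥ cstar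
  have keyA : ∀ (c' : ℝ), cstar ≤ c' → ∀ x,
      (fstar : EReal) ≤ f x + ((c' * Metric.infDist (g x) C : ℝ) : EReal) := by
    intro c' hc' x
    obtain ⟨p, hp, hdist⟩ := hCcl.exists_infDist_eq_dist hC (g x)
    have hmem : g x ∈ C + ({g x - p} : Set (EuclideanSpace ℝ (Fin m))) := by
      refine Set.mem_add.mpr ⟨p, hp, g x - p, rfl, ?_⟩
      abel
    have h1 := hcalm x (g x - p) hmem
    have hnorm : ‖g x - p‖ = Metric.infDist (g x) C := by
      rw [hdist, dist_eq_norm]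
    refine h1.trans ?_
    apply add_le_add le_rfl
    rw [EReal.coe_le_coe_iff, hnorm]
    exact mul_le_mul_of_nonneg_right hc' Metric.infDist_nonneg
  have hinf : (⨅ x', f x' + ((c * Metric.infDist (g x') C : ℝ) : EReal))
      = (fstar : EReal) := by
    apply le_antisymm
    · rw [hfstar]
      refine le_iInf fun x => le_iInf fun hx => ?_
      have hd : Metric.infDist (g x) C = 0 := Metric.infDist_zero_of_mem hx
      have : f x + ((c * Metric.infDist (g x) C : ℝ) : EReal) = f x := by
        rw [hd, mul_zero]; simp
      exact (iInf_le _ x).trans this.le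
    · exact le_iInf (keyA c hc.le)
  ext x
  simp only [Set.mem_setOf_eq, hinf]
  constructor
  · rintro ⟨hx, hfx⟩
    rw [Metric.infDist_zero_of_mem hx, mul_zero, hfx]
    simp
  · intro h
    set d := Metric.infDist (g x) C with hd
    have hdge : (0:ℝ) ≤ d := Metric.infDist_nonneg
    have htop : f x ≠ ⊤ := by
      intro ht
      rw [ht, EReal.top_add_coe] at h
      exact absurd h (by simp)
    obtain ⟨r, hr⟩ : ∃ r : ℝ, f x = (r : EReal) :=
      ⟨(f x).toReal, (EReal.coe_toReal htop (hf x)).symm⟩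
    rw [hr, ← EReal.coe_add] at h
    have hre : r + c * d = fstar := by exact_mod_cast h
    have hA := keyA cstar le_rfl x
    rw [hr, ← hd, ← EReal.coe_add] at hA
    have hre2 : fstar ≤ r + cstar * d := by exact_mod_cast hA
    have hd0 : d = 0 := by nlinarith
    have hxC : g x ∈ C := by
      have := Metric.mem_closure_iff_infDist_zero hC (x := g x)
      rw [hCcl.closure_eq] at this
      exact this.mpr hd0
    refine ⟨hxC, ?_⟩
    rw [hr]
    norm_cast
    rw [hd0, mul_zero, add_zero] at hre
    exact hre
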